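/- Let V₀, V₁, V₂ be symplectic vector spaces, L₀₁ ⊆ V₀⁻ × V₁ and L₁₂ ⊆ V₁⁻ × V₂ linear Lagrangian correspondences. Then the geometric composition L₀₁ ∘ L₁₂ := {(v₀, v₂) : ∃ v₁, (v₀,v₁) ∈ L₀₁ ∧ (v₁,v₂) ∈ L₁₂} is a Lagrangian subspace of V₀⁻ × V₂. -/

import Mathlib

open Submodule Module

abbrev BF (V : Type*) [AddCommGroup V] [Module ℝ V] := LinearMap.BilinForm ℝ V

def IsSymplectic {V : Type*} [AddCommGroup V] [Module ℝ V] (ω : BF V) : Prop :=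
  (∀ v, ω v v = 0) ∧ ω.Nondegenerate

def prodForm {V₀ V₁ : Type*} [AddCommGroup V₀] [Module ℝ V₀] [AddCommGroup V₁] [Module ℝ V₁]
    (ω₀ : BF V₀) (ω₁ : BF V₁) : BF (V₀ × V₁) :=
  ω₁.comp (LinearMap.snd ℝ V₀ V₁) (LinearMap.snd ℝ V₀ V₁)
    - ω₀.comp (LinearMap.fst ℝ V₀ V₁) (LinearMap.fst ℝ V₀ V₁)

def IsLagrangian {V : Type*} [AddCommGroup V] [Module ℝ V] (ω : BF V) (L : Submodule ℝ V) : Prop :=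
  ω.orthogonal L = L

def LagComp {V₀ V₁ V₂ : Type*} [AddCommGroup V₀] [Module ℝ V₀] [AddCommGroup V₁] [Module ℝ V₁]
    [AddCommGroup V₂] [Module ℝ V₂]
    (L₀₁ : Submodule ℝ (V₀ × V₁)) (L₁₂ : Submodule ℝ (V₁ × V₂)) : Submodule ℝ (V₀ × V₂) where
  carrier := {p | ∃ v₁, (p.1, v₁) ∈ L₀₁ ∧ (v₁, p.2) ∈ L₁₂}
  add_mem' := by
    rintro p q ⟨a, ha₁, ha₂⟩ ⟨b, hb₁, hb₂⟩
    exact ⟨a + b, by simpa using L₀₁.add_mem ha₁ hb₁, by simpa using L₁₂.add_mem ha₂ hb₂⟩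
  zero_mem' := ⟨0, by exact L₀₁.zero_mem, by exact L₁₂.zero_mem⟩
  smul_mem' := by
    rintro c p ⟨a, h₁, h₂⟩
    exact ⟨c • a, by simpa using L₀₁.smul_mem c h₁, by simpa using L₁₂.smul_mem c h₂⟩

section Aux

variable {V₀ V₁ V₂ : Type*} [AddCommGroup V₀] [Module ℝ V₀] [AddCommGroup V₁] [Module ℝ V₁]
  [AddCommGroup V₂] [Module ℝ V₂]

@[simp] lemma prodForm_apply (ω₀ : BF V₀) (ω₁ : BF V₁) (x y : V₀ × V₁) :
    prodForm ω₀ ω₁ x y = ω₁ x.2 y.2 - ω₀ x.1 y.1 := rfl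

/-- direct sum of bilinear forms -/
def dsum (ω : BF V₀) (ω' : BF V₁) : BF (V₀ × V₁) :=
  ω.comp (LinearMap.fst ℝ V₀ V₁) (LinearMap.fst ℝ V₀ V₁)
    + ω'.comp (LinearMap.snd ℝ V₀ V₁) (LinearMap.snd ℝ V₀ V₁)

@[simp] lemma dsum_apply (ω : BF V₀) (ω' : BF V₁) (x y : V₀ × V₁) :
    dsum ω ω' x y = ω x.1 y.1 + ω' x.2 y.2 := rfl

lemma prodForm_isSymplectic {ω₀ : BF V₀} {ω₁ : BF V₁} (h₀ : IsSymplectic ω₀)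
    (h₁ : IsSymplectic ω₁) : IsSymplectic (prodForm ω₀ ω₁) := by
  constructor
  · intro v; simp [h₀.1, h₁.1]
  · refine ⟨fun x hx => ?_, fun x hx => ?_⟩
    · have ha : x.1 = 0 := h₀.2.1 x.1 fun n => by simpa using (hx (n, 0)).symm
      have hb : x.2 = 0 := h₁.2.1 x.2 fun n => by simpa using hx (0, n)
      exact Prod.ext ha hb
    · have ha : x.1 = 0 := h₀.2.2 x.1 fun n => by simpa using (hx (n, 0)).symm
      have hb : x.2 = 0 := h₁.2.2 x.2 fun n => by simpa using hx (0, n)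
      exact Prod.ext ha hb

lemma dsum_isSymplectic {ω₀ : BF V₀} {ω₁ : BF V₁} (h₀ : IsSymplectic ω₀)
    (h₁ : IsSymplectic ω₁) : IsSymplectic (dsum ω₀ ω₁) := by
  constructor
  · intro v; simp [h₀.1, h₁.1]
  · refine ⟨fun x hx => ?_, fun x hx => ?_⟩
    · have ha : x.1 = 0 := h₀.2.1 x.1 fun n => by simpa using hx (n, 0)
      have hb : x.2 = 0 := h₁.2.1 x.2 fun n => by simpa using hx (0, n)
      exact Prod.ext ha hb
    · have ha : x.1 = 0 := h₀.2.2 x.1 fun n => by simpa using hx (n, 0)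
      have hb : x.2 = 0 := h₁.2.2 x.2 fun n => by simpa using hx (0, n)
      exact Prod.ext ha hb

lemma isRefl_of_symplectic {V : Type*} [AddCommGroup V] [Module ℝ V] {ω : BF V}
    (h : IsSymplectic ω) : ω.IsRefl := LinearMap.IsAlt.isRefl h.1

lemma orthogonal_sup {V : Type*} [AddCommGroup V] [Module ℝ V] (B : BF V)
    (p q : Submodule ℝ V) :
    B.orthogonal (p ⊔ q) = B.orthogonal p ⊓ B.orthogonal q := by
  apply le_antisymm
  · exact le_inf (B.orthogonal_le le_sup_left) (B.orthogonal_le le_sup_right)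
  · rintro x ⟨hxp, hxq⟩ n hn
    rcases Submodule.mem_sup.mp hn with ⟨y, hy, z, hz, rfl⟩
    have : B (y + z) x = B y x + B z x := by simp
    rw [this, hxp y hy, hxq z hz, add_zero]

lemma orthogonal_prod (ω₀ : BF V₀) (ω₁ : BF V₁) (p : Submodule ℝ V₀) (q : Submodule ℝ V₁) :
    (dsum ω₀ ω₁).orthogonal (p.prod q) = (ω₀.orthogonal p).prod (ω₁.orthogonal q) := by
  ext x
  simp only [LinearMap.BilinForm.mem_orthogonal_iff, Submodule.mem_prod,
    LinearMap.BilinForm.IsOrtho, dsum_apply]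
  constructor
  · intro h
    constructor
    · intro n hn; simpa using h (n, 0) ⟨hn, q.zero_mem⟩
    · intro n hn; simpa using h (0, n) ⟨p.zero_mem, hn⟩
  · rintro ⟨h1, h2⟩ n ⟨hn1, hn2⟩
    rw [h1 n.1 hn1, h2 n.2 hn2, add_zero]

lemma finrank_submodule_prod (p : Submodule ℝ V₀) (q : Submodule ℝ V₁)
    [FiniteDimensional ℝ V₀] [FiniteDimensional ℝ V₁] :
    finrank ℝ (p.prod q) = finrank ℝ p + finrank ℝ q := by
  have hinj : Function.Injective (p.subtype.prodMap q.subtype) := by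
    rintro ⟨a, b⟩ ⟨c, d⟩ h
    simp only [LinearMap.prodMap_apply, Prod.mk.injEq, Submodule.coe_subtype] at h
    exact Prod.ext (Subtype.ext h.1) (Subtype.ext h.2)
  have hrange : LinearMap.range (p.subtype.prodMap q.subtype) = p.prod q := by
    ext x
    simp only [LinearMap.mem_range, Submodule.mem_prod]
    constructor
    · rintro ⟨⟨a, b⟩, rfl⟩; exact ⟨a.2, b.2⟩
    · rintro ⟨h1, h2⟩; exact ⟨(⟨x.1, h1⟩, ⟨x.2, h2⟩), rfl⟩
  rw [← hrange, LinearMap.finrank_range_of_inj hinj, Module.finrank_prod]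

lemma two_finrank_lagrangian {V : Type*} [AddCommGroup V] [Module ℝ V] [FiniteDimensional ℝ V]
    {ω : BF V} (h : IsSymplectic ω) {L : Submodule ℝ V} (hL : IsLagrangian ω L) :
    2 * finrank ℝ L = finrank ℝ V := by
  have := LinearMap.BilinForm.finrank_add_finrank_orthogonal
    (B := ω) (isRefl_of_symplectic h) L
  rw [LinearMap.BilinForm.orthogonal_top_eq_bot h.2, inf_bot_eq, finrank_bot, add_zero,
    hL] at this
  omega

end Aux

section Main

variable (V₀ V₁ V₂ : Type) [AddCommGroup V₀] [Module ℝ V₀] [AddCommGroup V₁] [Module ℝ V₁]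
  [AddCommGroup V₂] [Module ℝ V₂]

/-- the "diagonal" embedding `(v₀,v₁,v₂) ↦ ((v₀,v₁),(v₁,v₂))`. -/
def Dmap : (V₀ × V₁ × V₂) →ₗ[ℝ] (V₀ × V₁) × (V₁ × V₂) :=
  ((LinearMap.fst ℝ V₀ (V₁ × V₂)).prod
      ((LinearMap.fst ℝ V₁ V₂).comp (LinearMap.snd ℝ V₀ (V₁ × V₂)))).prod
    (((LinearMap.fst ℝ V₁ V₂).comp (LinearMap.snd ℝ V₀ (V₁ × V₂))).prod
      ((LinearMap.snd ℝ V₁ V₂).comp (LinearMap.snd ℝ V₀ (V₁ × V₂))))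

@[simp] lemma Dmap_apply (x : V₀ × V₁ × V₂) :
    Dmap V₀ V₁ V₂ x = ((x.1, x.2.1), (x.2.1, x.2.2)) := rfl

/-- `w ↦ ((0,w),(w,0))`. -/
def jmap : V₁ →ₗ[ℝ] (V₀ × V₁) × (V₁ × V₂) :=
  ((0 : V₁ →ₗ[ℝ] V₀).prod LinearMap.id).prod (LinearMap.id.prod (0 : V₁ →ₗ[ℝ] V₂))

@[simp] lemma jmap_apply (w : V₁) : jmap V₀ V₁ V₂ w = ((0, w), (w, 0)) := rfl

/-- projection `((a,b),(c,d)) ↦ (a,d)`. -/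
def pmap : (V₀ × V₁) × (V₁ × V₂) →ₗ[ℝ] V₀ × V₂ :=
  ((LinearMap.fst ℝ V₀ V₁).comp (LinearMap.fst ℝ (V₀ × V₁) (V₁ × V₂))).prod
    ((LinearMap.snd ℝ V₁ V₂).comp (LinearMap.snd ℝ (V₀ × V₁) (V₁ × V₂)))

@[simp] lemma pmap_apply (x : (V₀ × V₁) × (V₁ × V₂)) :
    pmap V₀ V₁ V₂ x = (x.1.1, x.2.2) := rfl

end Main

/-- The geometric composition of linear Lagrangian correspondences is a
Lagrangian subspace of V₀⁻ × V₂. -/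
theorem lagrangian_comp_isLagrangian
    {V₀ V₁ V₂ : Type} [AddCommGroup V₀] [Module ℝ V₀] [AddCommGroup V₁] [Module ℝ V₁]
    [AddCommGroup V₂] [Module ℝ V₂]
    [FiniteDimensional ℝ V₀] [FiniteDimensional ℝ V₁] [FiniteDimensional ℝ V₂]
    (ω₀ : BF V₀) (ω₁ : BF V₁) (ω₂ : BF V₂)
    (h₀ : IsSymplectic ω₀) (h₁ : IsSymplectic ω₁) (h₂ : IsSymplectic ω₂)
    (L₀₁ : Submodule ℝ (V₀ × V₁)) (L₁₂ : Submodule ℝ (V₁ × V₂))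
    (hL₀₁ : IsLagrangian (prodForm ω₀ ω₁) L₀₁) (hL₁₂ : IsLagrangian (prodForm ω₁ ω₂) L₁₂) :
    IsLagrangian (prodForm ω₀ ω₂) (LagComp L₀₁ L₁₂) := by
  classical
  set Ω : BF ((V₀ × V₁) × (V₁ × V₂)) := dsum (prodForm ω₀ ω₁) (prodForm ω₁ ω₂) with hΩdef
  have hΩ : IsSymplectic Ω :=
    dsum_isSymplectic (prodForm_isSymplectic h₀ h₁) (prodForm_isSymplectic h₁ h₂)
  have hΩr : Ω.IsRefl := isRefl_of_symplectic hΩ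
  set P : Submodule ℝ ((V₀ × V₁) × (V₁ × V₂)) := L₀₁.prod L₁₂ with hPdef
  set D : Submodule ℝ ((V₀ × V₁) × (V₁ × V₂)) := LinearMap.range (Dmap V₀ V₁ V₂) with hDdef
  set J : Submodule ℝ ((V₀ × V₁) × (V₁ × V₂)) := LinearMap.range (jmap V₀ V₁ V₂) with hJdef
  set L : Submodule ℝ (V₀ × V₂) := LagComp L₀₁ L₁₂ with hLdef
  -- orthogonal of P is P
  have hPorth : Ω.orthogonal P = P := by
    rw [hΩdef, hPdef, orthogonal_prod, hL₀₁, hL₁₂]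
  -- orthogonal of D is J
  have hDorth : Ω.orthogonal D = J := by
    ext x
    obtain ⟨⟨x₀, x₁⟩, y₁, x₂⟩ := x
    simp only [LinearMap.BilinForm.mem_orthogonal_iff, hDdef, hJdef, LinearMap.mem_range,
      LinearMap.BilinForm.IsOrtho]
    constructor
    · intro h
      have h' : ∀ v : V₀ × V₁ × V₂, Ω (Dmap V₀ V₁ V₂ v) ((x₀, x₁), y₁, x₂) = 0 :=
        fun v => h _ ⟨v, rfl⟩
      have hx₀ : x₀ = 0 := by
        apply h₀.2.1
        intro v
        have := h' (v, 0, 0)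
        simp only [hΩdef, Dmap_apply, dsum_apply, prodForm_apply, map_zero,
          LinearMap.zero_apply] at this
        have h2 : ω₀ v x₀ = 0 := by linarith
        exact isRefl_of_symplectic h₀ _ _ h2
      have hx₂ : x₂ = 0 := by
        apply h₂.2.1
        intro v
        have := h' (0, 0, v)
        simp only [hΩdef, Dmap_apply, dsum_apply, prodForm_apply, map_zero,
          LinearMap.zero_apply] at this
        have h2 : ω₂ v x₂ = 0 := by linarith [this]
        exact isRefl_of_symplectic h₂ _ _ h2
      have hx₁ : x₁ = y₁ := by
        have key : ∀ v : V₁, ω₁ v (x₁ - y₁) = 0 := by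
          intro v
          have := h' (0, v, 0)
          simp only [hΩdef, Dmap_apply, dsum_apply, prodForm_apply, map_zero,
            LinearMap.zero_apply] at this
          rw [map_sub]
          linarith [this]
        have : x₁ - y₁ = 0 := h₁.2.1 _ fun v => isRefl_of_symplectic h₁ _ _ (key v)
        exact sub_eq_zero.mp this
      exact ⟨x₁, by rw [hx₀, hx₁, hx₂]; rfl⟩
    · rintro ⟨w, hw⟩ n ⟨v, rfl⟩
      rw [← hw]
      simp only [hΩdef, Dmap_apply, jmap_apply, dsum_apply, prodForm_apply, map_zero]
      ring
  -- map of P ⊓ D under pmap is L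
  have hmap : (P ⊓ D).map (pmap V₀ V₁ V₂) = L := by
    ext ⟨v₀, v₂⟩
    simp only [Submodule.mem_map, Submodule.mem_inf, hPdef, hDdef, LinearMap.mem_range]
    constructor
    · rintro ⟨x, ⟨hxP, ⟨v, rfl⟩⟩, hx⟩
      rw [Submodule.mem_prod] at hxP
      simp only [Dmap_apply, pmap_apply, Prod.mk.injEq] at hx hxP
      exact ⟨v.2.1, by rw [← hx.1]; exact hxP.1, by rw [← hx.2]; exact hxP.2⟩
    · rintro ⟨v₁, hv1, hv2⟩
      exact ⟨Dmap V₀ V₁ V₂ (v₀, v₁, v₂), ⟨Submodule.mem_prod.mpr ⟨hv1, hv2⟩, ⟨_, rfl⟩⟩, rfl⟩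
  -- kernel of pmap intersected with D is J
  have hkerD : LinearMap.ker (pmap V₀ V₁ V₂) ⊓ D = J := by
    ext x
    simp only [Submodule.mem_inf, LinearMap.mem_ker, hDdef, hJdef, LinearMap.mem_range]
    constructor
    · rintro ⟨hk, ⟨v, rfl⟩⟩
      simp only [pmap_apply, Dmap_apply] at hk
      obtain ⟨hk1, hk2⟩ : v.1 = 0 ∧ v.2.2 = 0 := by
        constructor
        · simpa using congrArg Prod.fst hk
        · simpa using congrArg Prod.snd hk
      exact ⟨v.2.1, by simp [hk1, hk2, Prod.ext_iff]⟩
    · rintro ⟨w, rfl⟩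
      exact ⟨by simp, ⟨(0, w, 0), rfl⟩⟩
  -- dimension bookkeeping
  have hfr01 : 2 * finrank ℝ L₀₁ = finrank ℝ V₀ + finrank ℝ V₁ := by
    rw [two_finrank_lagrangian (prodForm_isSymplectic h₀ h₁) hL₀₁, Module.finrank_prod]
  have hfr12 : 2 * finrank ℝ L₁₂ = finrank ℝ V₁ + finrank ℝ V₂ := by
    rw [two_finrank_lagrangian (prodForm_isSymplectic h₁ h₂) hL₁₂, Module.finrank_prod]
  have hfrP : finrank ℝ P = finrank ℝ L₀₁ + finrank ℝ L₁₂ := finrank_submodule_prod _ _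
  have hDinj : Function.Injective (Dmap V₀ V₁ V₂) := by
    intro x y h
    simp only [Dmap_apply, Prod.mk.injEq] at h
    exact Prod.ext h.1.1 (Prod.ext h.1.2 h.2.2)
  have hfrD : finrank ℝ D = finrank ℝ V₀ + finrank ℝ V₁ + finrank ℝ V₂ := by
    rw [hDdef, LinearMap.finrank_range_of_inj hDinj, Module.finrank_prod, Module.finrank_prod]
    ring
  have hfrW : finrank ℝ ((V₀ × V₁) × (V₁ × V₂))
      = finrank ℝ V₀ + finrank ℝ V₁ + (finrank ℝ V₁ + finrank ℝ V₂) := by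
    rw [Module.finrank_prod, Module.finrank_prod, Module.finrank_prod]
  have hsup : finrank ℝ (P ⊔ D : Submodule ℝ _) + finrank ℝ (P ⊓ J : Submodule ℝ _)
      = finrank ℝ ((V₀ × V₁) × (V₁ × V₂)) := by
    have := LinearMap.BilinForm.finrank_add_finrank_orthogonal (B := Ω) hΩr (P ⊔ D)
    rw [LinearMap.BilinForm.orthogonal_top_eq_bot hΩ.2, inf_bot_eq, finrank_bot, add_zero,
      orthogonal_sup, hPorth, hDorth] at this
    exact this
  have hinf : finrank ℝ (P ⊔ D : Submodule ℝ _) + finrank ℝ (P ⊓ D : Submodule ℝ _)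
      = finrank ℝ P + finrank ℝ D := Submodule.finrank_sup_add_finrank_inf_eq P D
  -- rank-nullity for pmap restricted to P ⊓ D
  have hrank : finrank ℝ L + finrank ℝ (P ⊓ J : Submodule ℝ _)
      = finrank ℝ (P ⊓ D : Submodule ℝ _) := by
    have hrn := LinearMap.finrank_range_add_finrank_ker ((pmap V₀ V₁ V₂).comp (P ⊓ D).subtype)
    have hr : LinearMap.range ((pmap V₀ V₁ V₂).comp (P ⊓ D).subtype) = L := by
      rw [LinearMap.range_comp, Submodule.range_subtype, hmap]
    have hk : LinearMap.ker ((pmap V₀ V₁ V₂).comp (P ⊓ D).subtype)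
        = Submodule.comap (P ⊓ D).subtype (LinearMap.ker (pmap V₀ V₁ V₂) ⊓ (P ⊓ D)) := by
      rw [LinearMap.ker_comp, Submodule.comap_inf, Submodule.comap_subtype_self, inf_top_eq]
    have hker_eq : LinearMap.ker (pmap V₀ V₁ V₂) ⊓ (P ⊓ D) = P ⊓ J := by
      rw [inf_comm P D, ← inf_assoc, hkerD, inf_comm]
    have hkfin : finrank ℝ (LinearMap.ker ((pmap V₀ V₁ V₂).comp (P ⊓ D).subtype))
        = finrank ℝ (P ⊓ J : Submodule ℝ _) := by
      rw [hk, hker_eq]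
      exact LinearEquiv.finrank_eq (Submodule.comapSubtypeEquivOfLe (by
        rw [← hker_eq]; exact inf_le_right))
    rw [hr, hkfin] at hrn
    exact hrn
  have hfrL : 2 * finrank ℝ L = finrank ℝ V₀ + finrank ℝ V₂ := by omega
  -- isotropy
  have hiso : L ≤ (prodForm ω₀ ω₂).orthogonal L := by
    intro x hx n hn
    obtain ⟨u, hu1, hu2⟩ := hn
    obtain ⟨w, hw1, hw2⟩ := hx
    rw [← hL₀₁] at hw1
    rw [← hL₁₂] at hw2
    have e1 := hw1 (n.1, u) hu1
    have e2 := hw2 (u, n.2) hu2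
    simp only [LinearMap.BilinForm.IsOrtho, prodForm_apply] at e1 e2 ⊢
    linarith
  -- conclude
  have hle : finrank ℝ ((prodForm ω₀ ω₂).orthogonal L) ≤ finrank ℝ L := by
    rw [LinearMap.BilinForm.finrank_orthogonal (prodForm_isSymplectic h₀ h₂).2
      L, Module.finrank_prod]
    omega
  exact (Submodule.eq_of_le_of_finrank_le hiso hle).symm
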